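/- Every nonempty downward closed subset D of Σ* can be written as a finite union of ideals D = I₁ ∪ ⋯ ∪ Iₙ. -/

import Mathlib

def IsDirectedLang {A : Type*} (L : Set (List A)) : Prop :=
  ∀ u ∈ L, ∀ v ∈ L, ∃ w ∈ L, u.Sublist w ∧ v.Sublist w

def dcl {A : Type*} (L : Set (List A)) : Set (List A) := {u | ∃ v ∈ L, u.Sublist v}

def DownwardClosed {A : Type*} (D : Set (List A)) : Prop :=
  ∀ u v : List A, u.Sublist v → v ∈ D → u ∈ D

def IsIdeal {A : Type*} (I : Set (List A)) : Prop :=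
  I.Nonempty ∧ DownwardClosed I ∧ IsDirectedLang I

inductive Atom (A : Type*) where
  | single : A → Atom A
  | alph : Finset A → Atom A

def Atom.lang {A : Type*} : Atom A → Set (List A)
  | .single a => {[], [a]}
  | .alph d => {w | ∀ c ∈ w, c ∈ d}

def Atom.Valid {A : Type*} : Atom A → Prop
  | .single _ => True
  | .alph d => d.Nonempty

def conc {A : Type*} (L M : Set (List A)) : Set (List A) :=
  {w | ∃ u ∈ L, ∃ v ∈ M, w = u ++ v}

def Idl {A : Type*} : List (Atom A) → Set (List A)
  | [] => {[]}
  | α :: r => conc α.lang (Idl r)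

def LeftAbsorbs {A : Type*} (α β : Atom A) : Prop := Idl [α, β] = Idl [α]
def RightAbsorbs {A : Type*} (α β : Atom A) : Prop := Idl [α, β] = Idl [β]
def Absorptive {A : Type*} (α β : Atom A) : Prop := LeftAbsorbs α β ∨ RightAbsorbs α β
def Reduced {A : Type*} (r : List (Atom A)) : Prop := r.Chain' fun α β => ¬ Absorptive α β

def atomWeight {A : Type*} (k : ℕ) : Atom A → ℕ
  | .single _ => 1
  | .alph d => (k+1) ^ d.card

def repWeight {A : Type*} (k : ℕ) (r : List (Atom A)) : ℕ := (r.map (atomWeight k)).sum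


section Aux
variable {A : Type*} [Fintype A]

def Decomposable (D : Set (List A)) : Prop :=
  ∃ (n : ℕ) (I : Fin n → Set (List A)), (∀ i, IsIdeal (I i)) ∧ D = ⋃ i, I i

def badSet (A : Type*) [Fintype A] : Set (Set (List A)) :=
  {D | DownwardClosed D ∧ D.Nonempty ∧ ¬ Decomposable D}

def dcRel (X Y : Set (List A)) : Prop := DownwardClosed Y ∧ X ⊂ Y

lemma higman (f : ℕ → List A) : ∃ i j, i < j ∧ (f i).Sublist (f j) := by
  have h := Set.PartiallyWellOrderedOn.partiallyWellOrderedOn_sublistForall₂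
    (Eq : A → A → Prop) (Set.finite_univ.partiallyWellOrderedOn)
  obtain ⟨i, j, hij, hs⟩ := h (fun n => ⟨f n, fun x _ => Set.mem_univ x⟩)
  refine ⟨i, j, hij, ?_⟩
  obtain ⟨l, hl, hsub⟩ := List.sublistForall₂_iff.1 hs
  have : f i = l := by
    have := List.forall₂_eq_eq_eq (α := A)
    rw [show (Eq : A → A → Prop) = ((· = ·)) from rfl] at hl
    rw [this] at hl
    exact hl
  rwa [this]

lemma dcRel_wf : WellFounded (dcRel (A := A)) := by
  haveI : IsIrrefl (Set (List A)) dcRel := ⟨fun X h => h.2.ne rfl⟩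
  haveI : IsTrans (Set (List A)) dcRel :=
    ⟨fun X Y Z h1 h2 => ⟨h2.1, h1.2.trans h2.2⟩⟩
  haveI : IsStrictOrder (Set (List A)) dcRel := ⟨⟩
  rw [RelEmbedding.wellFounded_iff_isEmpty]
  constructor
  intro g
  have hstep : ∀ n : ℕ, dcRel (g (n + 1)) (g n) := fun n =>
    g.map_rel_iff.2 (Nat.lt_succ_self n)
  have hmono : ∀ i j : ℕ, i ≤ j → g j ⊆ g i := by
    intro i j hij
    induction j with
    | zero => simp_all
    | succ j ih =>
      rcases Nat.lt_or_ge i (j+1) with h | h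
      · exact ((hstep j).2.subset).trans (ih (Nat.lt_succ_iff.1 h))
      · have : i = j + 1 := le_antisymm hij h
        subst this; exact subset_rfl
  have hx : ∀ n : ℕ, ∃ x, x ∈ g n ∧ x ∉ g (n + 1) :=
    fun n => Set.exists_of_ssubset (hstep n).2
  choose x hx1 hx2 using hx
  obtain ⟨i, j, hij, hsub⟩ := higman x
  have hji : x j ∈ g (i + 1) := hmono (i+1) j hij (hx1 j)
  exact hx2 i ((hstep (i+1)).1 (x i) (x j) hsub hji)

lemma union_decomposable {D₁ D₂ : Set (List A)} (h1 : Decomposable D₁)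
    (h2 : Decomposable D₂) : Decomposable (D₁ ∪ D₂) := by
  obtain ⟨n₁, I₁, hI₁, hU₁⟩ := h1
  obtain ⟨n₂, I₂, hI₂, hU₂⟩ := h2
  refine ⟨n₁ + n₂, (Sum.elim I₁ I₂) ∘ finSumFinEquiv.symm, ?_, ?_⟩
  · intro i
    rcases h : finSumFinEquiv.symm i with a | b
    · simpa [h] using hI₁ a
    · simpa [h] using hI₂ b
  · have he := Function.Surjective.iUnion_comp
      (Equiv.surjective (finSumFinEquiv (m := n₁) (n := n₂)).symm)
      (fun j => Sum.elim I₁ I₂ j)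
    simp only [Function.comp_def]
    rw [he, Set.iUnion_sum]
    simp [hU₁, hU₂]

lemma min_bad_decomposable {M : Set (List A)} (hMdc : DownwardClosed M)
    (hMne : M.Nonempty) (hmin : ∀ X ∈ badSet A, ¬ dcRel X M) :
    Decomposable M := by
  by_cases hdir : IsDirectedLang M
  · exact ⟨1, fun _ => M, fun _ => ⟨hMne, hMdc, hdir⟩, (Set.iUnion_const M).symm⟩
  · simp only [IsDirectedLang, not_forall, not_exists, not_and] at hdir
    obtain ⟨u, hu, v, hv, hno⟩ := hdir
    have hnuv : ¬ u.Sublist v := fun h => hno v hv h (List.Sublist.refl v)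
    have hnvu : ¬ v.Sublist u := fun h => hno u hu (List.Sublist.refl u) h
    set D₁ : Set (List A) := {w ∈ M | ¬ u.Sublist w} with hD₁
    set D₂ : Set (List A) := {w ∈ M | ¬ v.Sublist w} with hD₂
    have hdc₁ : DownwardClosed D₁ := fun a b hab ⟨hbM, hbu⟩ =>
      ⟨hMdc a b hab hbM, fun h => hbu (h.trans hab)⟩
    have hdc₂ : DownwardClosed D₂ := fun a b hab ⟨hbM, hbv⟩ =>
      ⟨hMdc a b hab hbM, fun h => hbv (h.trans hab)⟩
    have hne₁ : D₁.Nonempty := ⟨v, hv, hnuv⟩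
    have hne₂ : D₂.Nonempty := ⟨u, hu, hnvu⟩
    have hss₁ : D₁ ⊂ M := ⟨fun w hw => hw.1, fun hsub =>
      (hsub hu).2 (List.Sublist.refl u)⟩
    have hss₂ : D₂ ⊂ M := ⟨fun w hw => hw.1, fun hsub =>
      (hsub hv).2 (List.Sublist.refl v)⟩
    have hd₁ : Decomposable D₁ := by
      by_contra h
      exact hmin D₁ ⟨hdc₁, hne₁, h⟩ ⟨hMdc, hss₁⟩
    have hd₂ : Decomposable D₂ := by
      by_contra h
      exact hmin D₂ ⟨hdc₂, hne₂, h⟩ ⟨hMdc, hss₂⟩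
    have hMeq : M = D₁ ∪ D₂ := by
      ext w
      constructor
      · intro hw
        by_contra hc
        simp only [Set.mem_setOf_eq, hD₁, hD₂, Set.mem_union, not_or] at hc
        have h1 : u.Sublist w := by
          by_contra h'; exact hc.1 ⟨hw, h'⟩
        have h2 : v.Sublist w := by
          by_contra h'; exact hc.2 ⟨hw, h'⟩
        exact hno w hw h1 h2
      · rintro (⟨h, _⟩ | ⟨h, _⟩) <;> exact h
    rw [hMeq]
    exact union_decomposable hd₁ hd₂

end Aux

theorem ideal_decomposition {A : Type*} [Fintype A] (D : Set (List A))
    (hD : DownwardClosed D) (hne : D.Nonempty) :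
    ∃ (n : ℕ) (I : Fin n → Set (List A)),
      (∀ i, IsIdeal (I i)) ∧ D = ⋃ i, I i := by
  by_contra hcon
  have hS : D ∈ badSet A := ⟨hD, hne, hcon⟩
  obtain ⟨M, ⟨hMdc, hMne, hMbad⟩, hmin⟩ :=
    (dcRel_wf (A := A)).has_min (badSet A) ⟨D, hS⟩
  exact hMbad (min_bad_decomposable hMdc hMne (fun X hX => hmin X hX))
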